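/- arXiv:0705.0188 — 5 statements merged into one kernel-verified Lean document; each statement's English description precedes it below -/
import Mathlib

section
/- Along any geodesic γ(t) = (x(t), y(t), z(t)) on the ellipsoid x²/a + y²/b + z²/c = 1 in Minkowski 3-space (i.e., a curve on the ellipsoid with γ''(t) = λ(t)·(x/a, y/b, −z/c)), the Joachimsthal function J = (x²/a² + y²/b² − z²/c²)·(u²/a + v²/b + w²/c), where (u,v,w) = γ'(t), is constant in t. -/
/-- Along any geodesic γ = (x,y,z) on the ellipsoid x²/a + y²/b + z²/c = 1 in Minkowski
3-space (γ'' = λ·(x/a, y/b, −z/c)), avoiding the degeneracy locus, the Joachimsthal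
function J = (x²/a² + y²/b² − z²/c²)(u²/a + v²/b + w²/c) is constant. -/
theorem stmt2 (a b c : ℝ) (ha : 0 < a) (hb : 0 < b) (hc : 0 < c)
    (x y z u v w lam : ℝ → ℝ)
    (hell : ∀ t, (x t) ^ 2 / a + (y t) ^ 2 / b + (z t) ^ 2 / c = 1)
    (hx : ∀ t, HasDerivAt x (u t) t) (hy : ∀ t, HasDerivAt y (v t) t)
    (hz : ∀ t, HasDerivAt z (w t) t)
    (hu : ∀ t, HasDerivAt u (lam t * (x t / a)) t)
    (hv : ∀ t, HasDerivAt v (lam t * (y t / b)) t)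
    (hw : ∀ t, HasDerivAt w (lam t * (-(z t) / c)) t)
    (hnd : ∀ t, (x t) ^ 2 / a ^ 2 + (y t) ^ 2 / b ^ 2 - (z t) ^ 2 / c ^ 2 ≠ 0) :
    ∀ s t : ℝ,
      ((x s) ^ 2 / a ^ 2 + (y s) ^ 2 / b ^ 2 - (z s) ^ 2 / c ^ 2) *
        ((u s) ^ 2 / a + (v s) ^ 2 / b + (w s) ^ 2 / c) =
      ((x t) ^ 2 / a ^ 2 + (y t) ^ 2 / b ^ 2 - (z t) ^ 2 / c ^ 2) *
        ((u t) ^ 2 / a + (v t) ^ 2 / b + (w t) ^ 2 / c) := by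
  have hF0 : ∀ t, x t * u t / a + y t * v t / b + z t * w t / c = 0 := by
    intro t
    have hE : HasDerivAt (fun t => x t ^ 2 / a + y t ^ 2 / b + z t ^ 2 / c)
        (2 * (x t * u t) / a + 2 * (y t * v t) / b + 2 * (z t * w t) / c) t := by
      have h := ((((hx t).pow 2).div_const a).add (((hy t).pow 2).div_const b)).add
        (((hz t).pow 2).div_const c)
      exact h.congr_deriv (by push_cast; ring)
    have hE' : HasDerivAt (fun t => x t ^ 2 / a + y t ^ 2 / b + z t ^ 2 / c) 0 t := by
      have heq : (fun t => x t ^ 2 / a + y t ^ 2 / b + z t ^ 2 / c) = fun _ => (1 : ℝ) :=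
        funext hell
      rw [heq]; exact hasDerivAt_const t 1
    have h := hE.unique hE'
    linear_combination h / 2
  have hQP : ∀ t, (u t ^ 2 / a + v t ^ 2 / b + w t ^ 2 / c) +
      lam t * (x t ^ 2 / a ^ 2 + y t ^ 2 / b ^ 2 - z t ^ 2 / c ^ 2) = 0 := by
    intro t
    have hF : HasDerivAt (fun t => x t * u t / a + y t * v t / b + z t * w t / c)
        ((u t ^ 2 / a + v t ^ 2 / b + w t ^ 2 / c) +
          lam t * (x t ^ 2 / a ^ 2 + y t ^ 2 / b ^ 2 - z t ^ 2 / c ^ 2)) t := by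
      have h := ((((hx t).mul (hu t)).div_const a).add (((hy t).mul (hv t)).div_const b)).add
        (((hz t).mul (hw t)).div_const c)
      refine h.congr_deriv ?_
      field_simp
      ring
    have hF' : HasDerivAt (fun t => x t * u t / a + y t * v t / b + z t * w t / c) 0 t := by
      have heq : (fun t => x t * u t / a + y t * v t / b + z t * w t / c) = fun _ => (0 : ℝ) :=
        funext hF0
      rw [heq]; exact hasDerivAt_const t 0
    exact hF.unique hF'
  have hJ : ∀ t, HasDerivAt (fun t => (x t ^ 2 / a ^ 2 + y t ^ 2 / b ^ 2 - z t ^ 2 / c ^ 2) *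
      (u t ^ 2 / a + v t ^ 2 / b + w t ^ 2 / c)) 0 t := by
    intro t
    have hP : HasDerivAt (fun t => x t ^ 2 / a ^ 2 + y t ^ 2 / b ^ 2 - z t ^ 2 / c ^ 2)
        (2 * (x t * u t) / a ^ 2 + 2 * (y t * v t) / b ^ 2 - 2 * (z t * w t) / c ^ 2) t := by
      have h := ((((hx t).pow 2).div_const (a ^ 2)).add (((hy t).pow 2).div_const (b ^ 2))).sub
        (((hz t).pow 2).div_const (c ^ 2))
      exact h.congr_deriv (by push_cast; ring)
    have hQ : HasDerivAt (fun t => u t ^ 2 / a + v t ^ 2 / b + w t ^ 2 / c)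
        (lam t * (2 * (x t * u t) / a ^ 2 + 2 * (y t * v t) / b ^ 2 - 2 * (z t * w t) / c ^ 2))
        t := by
      have h := ((((hu t).pow 2).div_const a).add (((hv t).pow 2).div_const b)).add
        (((hw t).pow 2).div_const c)
      refine h.congr_deriv ?_
      field_simp
      ring
    have h := hP.mul hQ
    refine h.congr_deriv ?_
    symm
    have h2 := hQP t
    linear_combination (-(2 * (x t * u t) / a ^ 2 + 2 * (y t * v t) / b ^ 2 -
      2 * (z t * w t) / c ^ 2)) * h2
  intro s t
  exact is_const_of_deriv_eq_zero (fun r => (hJ r).differentiableAt)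
    (fun r => (hJ r).deriv) s t
end

section
/- Let γ(t) be a unit-energy space-like geodesic on the ellipsoid x²/a + y²/b + z²/c = 1 in Minkowski 3-space (so ⟨γ', γ'⟩ = u² + v² − w² = 1 along γ), with constant Joachimsthal integral J. If γ(t) converges to a point P on the tropic (where x²/a² + y²/b² − z²/c² = 0) as t → t₀, then the rescaled velocity (ū, v̄, w̄) = μ·(u,v,w), with μ = √(x²/a² + y²/b² − z²/c²), satisfies ū² + v̄² − w̄² → 0 while ū² + v̄² + w̄² stays bounded away from 0 and ∞; i.e., the limiting direction of the geodesic at the tropic is a null direction. -/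
open Filter

lemma key_lemma (a b c u v w Q J : ℝ) (ha : 0 < a) (hb : 0 < b) (hc : 0 < c)
    (hQ : 0 < Q) (hJ : Q * (u ^ 2 / a + v ^ 2 / b + w ^ 2 / c) = J) :
    min a (min b c) * J ≤ Q * (u ^ 2 + v ^ 2 + w ^ 2) ∧
      Q * (u ^ 2 + v ^ 2 + w ^ 2) ≤ max a (max b c) * J := by
  set m := min a (min b c) with hm
  set M := max a (max b c) with hM
  have hma : m ≤ a := min_le_left _ _
  have hmb : m ≤ b := le_trans (min_le_right _ _) (min_le_left _ _)
  have hmc : m ≤ c := le_trans (min_le_right _ _) (min_le_right _ _)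
  have hMa : a ≤ M := le_max_left _ _
  have hMb : b ≤ M := le_trans (le_max_left _ _) (le_max_right _ _)
  have hMc : c ≤ M := le_trans (le_max_right _ _) (le_max_right _ _)
  have ea1 : m * (u ^ 2 / a) ≤ u ^ 2 := by
    rw [mul_comm, div_mul_eq_mul_div, div_le_iff₀ ha]
    exact mul_le_mul_of_nonneg_left hma (sq_nonneg u)
  have ea2 : u ^ 2 ≤ M * (u ^ 2 / a) := by
    rw [mul_comm, div_mul_eq_mul_div, le_div_iff₀ ha]
    exact mul_le_mul_of_nonneg_left hMa (sq_nonneg u)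
  have eb1 : m * (v ^ 2 / b) ≤ v ^ 2 := by
    rw [mul_comm, div_mul_eq_mul_div, div_le_iff₀ hb]
    exact mul_le_mul_of_nonneg_left hmb (sq_nonneg v)
  have eb2 : v ^ 2 ≤ M * (v ^ 2 / b) := by
    rw [mul_comm, div_mul_eq_mul_div, le_div_iff₀ hb]
    exact mul_le_mul_of_nonneg_left hMb (sq_nonneg v)
  have ec1 : m * (w ^ 2 / c) ≤ w ^ 2 := by
    rw [mul_comm, div_mul_eq_mul_div, div_le_iff₀ hc]
    exact mul_le_mul_of_nonneg_left hmc (sq_nonneg w)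
  have ec2 : w ^ 2 ≤ M * (w ^ 2 / c) := by
    rw [mul_comm, div_mul_eq_mul_div, le_div_iff₀ hc]
    exact mul_le_mul_of_nonneg_left hMc (sq_nonneg w)
  constructor
  · calc m * J = Q * (m * (u ^ 2 / a) + m * (v ^ 2 / b) + m * (w ^ 2 / c)) := by
          rw [← hJ]; ring
      _ ≤ Q * (u ^ 2 + v ^ 2 + w ^ 2) :=
          mul_le_mul_of_nonneg_left (by linarith) hQ.le
  · calc Q * (u ^ 2 + v ^ 2 + w ^ 2)
        ≤ Q * (M * (u ^ 2 / a) + M * (v ^ 2 / b) + M * (w ^ 2 / c)) :=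
          mul_le_mul_of_nonneg_left (by linarith) hQ.le
      _ = M * J := by rw [← hJ]; ring

/-- A unit-energy space-like geodesic on the ellipsoid in Minkowski 3-space, with constant
Joachimsthal integral J₀ ≠ 0, approaching a point of a tropic: the rescaled velocity
(ū,v̄,w̄) = μ·(u,v,w), μ = √(x²/a²+y²/b²−z²/c²), satisfies ū²+v̄²−w̄² → 0 while
ū²+v̄²+w̄² stays bounded away from 0 and ∞: the limiting direction is null. -/
theorem stmt4 (a b c J0 t₀ x₀ y₀ z₀ : ℝ) (ha : 0 < a) (hb : 0 < b) (hc : 0 < c)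
    (hJ0 : J0 ≠ 0)
    (x y z u v w : ℝ → ℝ)
    (hell : ∀ t, (x t) ^ 2 / a + (y t) ^ 2 / b + (z t) ^ 2 / c = 1)
    (henergy : ∀ t, (u t) ^ 2 + (v t) ^ 2 - (w t) ^ 2 = 1)
    (hbelt : ∀ t, 0 < (x t) ^ 2 / a ^ 2 + (y t) ^ 2 / b ^ 2 - (z t) ^ 2 / c ^ 2)
    (hJ : ∀ t, ((x t) ^ 2 / a ^ 2 + (y t) ^ 2 / b ^ 2 - (z t) ^ 2 / c ^ 2) *
        ((u t) ^ 2 / a + (v t) ^ 2 / b + (w t) ^ 2 / c) = J0)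
    (hlim : Tendsto (fun t => (x t, y t, z t)) (nhdsWithin t₀ {t₀}ᶜ) (nhds (x₀, y₀, z₀)))
    (htrop : x₀ ^ 2 / a ^ 2 + y₀ ^ 2 / b ^ 2 - z₀ ^ 2 / c ^ 2 = 0)
    (hP : x₀ ^ 2 / a + y₀ ^ 2 / b + z₀ ^ 2 / c = 1) :
    Tendsto (fun t =>
        (Real.sqrt ((x t) ^ 2 / a ^ 2 + (y t) ^ 2 / b ^ 2 - (z t) ^ 2 / c ^ 2)) ^ 2 *
          ((u t) ^ 2 + (v t) ^ 2 - (w t) ^ 2)) (nhdsWithin t₀ {t₀}ᶜ) (nhds 0) ∧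
    ∃ m M : ℝ, 0 < m ∧
      ∀ᶠ t in nhdsWithin t₀ {t₀}ᶜ,
        m ≤ (Real.sqrt ((x t) ^ 2 / a ^ 2 + (y t) ^ 2 / b ^ 2 - (z t) ^ 2 / c ^ 2)) ^ 2 *
              ((u t) ^ 2 + (v t) ^ 2 + (w t) ^ 2) ∧
          (Real.sqrt ((x t) ^ 2 / a ^ 2 + (y t) ^ 2 / b ^ 2 - (z t) ^ 2 / c ^ 2)) ^ 2 *
              ((u t) ^ 2 + (v t) ^ 2 + (w t) ^ 2) ≤ M := by
  have hQ : ∀ t, (Real.sqrt ((x t) ^ 2 / a ^ 2 + (y t) ^ 2 / b ^ 2 - (z t) ^ 2 / c ^ 2)) ^ 2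
      = (x t) ^ 2 / a ^ 2 + (y t) ^ 2 / b ^ 2 - (z t) ^ 2 / c ^ 2 := fun t =>
    Real.sq_sqrt (hbelt t).le
  have hpos : ∀ t, 0 < (u t) ^ 2 / a + (v t) ^ 2 / b + (w t) ^ 2 / c := by
    intro t
    have h1 : (1:ℝ) ≤ (u t) ^ 2 + (v t) ^ 2 + (w t) ^ 2 := by
      nlinarith [henergy t, sq_nonneg (w t)]
    set k := max a (max b c) with hk
    have hkpos : 0 < k := lt_of_lt_of_le ha (le_max_left _ _)
    have hA : (u t)^2 / k ≤ (u t)^2 / a :=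
      div_le_div_of_nonneg_left (sq_nonneg _) ha (le_max_left _ _)
    have hB : (v t)^2 / k ≤ (v t)^2 / b :=
      div_le_div_of_nonneg_left (sq_nonneg _) hb (le_trans (le_max_left _ _) (le_max_right _ _))
    have hC : (w t)^2 / k ≤ (w t)^2 / c :=
      div_le_div_of_nonneg_left (sq_nonneg _) hc (le_trans (le_max_right _ _) (le_max_right _ _))
    have hsum : (1:ℝ)/k ≤ (u t)^2/k + (v t)^2/k + (w t)^2/k := by
      rw [← add_div, ← add_div]
      gcongr
    linarith [div_pos one_pos hkpos]
  have hJpos : 0 < J0 := by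
    have := hJ t₀
    nlinarith [hbelt t₀, hpos t₀]
  constructor
  · have hcont : Continuous fun p : ℝ × ℝ × ℝ => p.1 ^ 2 / a ^ 2 + p.2.1 ^ 2 / b ^ 2 - p.2.2 ^ 2 / c ^ 2 := by
      fun_prop
    have := (hcont.tendsto (x₀, y₀, z₀)).comp hlim
    rw [htrop] at this
    refine this.congr fun t => ?_
    simp only [Function.comp, hQ t, henergy t, mul_one]
  · have key := fun t => key_lemma a b c (u t) (v t) (w t)
        ((x t) ^ 2 / a ^ 2 + (y t) ^ 2 / b ^ 2 - (z t) ^ 2 / c ^ 2) J0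
        ha hb hc (hbelt t) (hJ t)
    refine ⟨min a (min b c) * J0, max a (max b c) * J0,
      mul_pos (lt_min ha (lt_min hb hc)) hJpos, Eventually.of_forall fun t => ?_⟩
    rw [hQ t]
    exact key t
end

section
/- The Gauss curvature K of the ellipsoid x²/a + y²/b + z²/c = 1 in Minkowski 3-space (with metric dx² + dy² − dz²), at points where the induced metric is nondegenerate, is given by 1/K = −abc·(x²/a² + y²/b² − z²/c²)²; in particular K < 0 everywhere off the tropics. -/
/-- Minkowski form on ℝ³ = (Fin 3 → ℝ). -/
def mink (p q : Fin 3 → ℝ) : ℝ := p 0 * q 0 + p 1 * q 1 - p 2 * q 2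

/-- Minkowski normal N(x,y,z) = (x/a, y/b, −z/c) to the ellipsoid. -/
noncomputable def Nvec (a b c : ℝ) (q : Fin 3 → ℝ) : Fin 3 → ℝ :=
  ![q 0 / a, q 1 / b, -(q 2) / c]

/-- f = ⟨N,N⟩ = x²/a² + y²/b² − z²/c². -/
noncomputable def fdeg (a b c : ℝ) (q : Fin 3 → ℝ) : ℝ :=
  (q 0 / a) ^ 2 + (q 1 / b) ^ 2 - (q 2 / c) ^ 2

/-- Unit normal field ν = N/√|f|. -/
noncomputable def nuField (a b c : ℝ) (q : Fin 3 → ℝ) : Fin 3 → ℝ :=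
  (Real.sqrt |fdeg a b c q|)⁻¹ • Nvec a b c q

/-- The differential of `Nvec` as a continuous linear map. -/
noncomputable def Lmap (a b c : ℝ) : (Fin 3 → ℝ) →L[ℝ] (Fin 3 → ℝ) :=
  ContinuousLinearMap.pi ![a⁻¹ • ContinuousLinearMap.proj 0,
    b⁻¹ • ContinuousLinearMap.proj 1, (-c⁻¹) • ContinuousLinearMap.proj 2]

lemma Lmap_eq (a b c : ℝ) : ⇑(Lmap a b c) = Nvec a b c := by
  funext q i
  fin_cases i <;>
    simp [Lmap, Nvec, ContinuousLinearMap.pi_apply, div_eq_inv_mul, neg_div]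

lemma fderiv_nu (a b c : ℝ) (p : Fin 3 → ℝ) (hnd : fdeg a b c p ≠ 0) (v : Fin 3 → ℝ) :
    fderiv ℝ (nuField a b c) p v =
      (Real.sqrt |fdeg a b c p|)⁻¹ • Nvec a b c v +
        (fderiv ℝ (fun q => (Real.sqrt |fdeg a b c q|)⁻¹) p v) • Nvec a b c p := by
  have hf : DifferentiableAt ℝ (fdeg a b c) p := by unfold fdeg; fun_prop
  have hg : DifferentiableAt ℝ (fun q => (Real.sqrt |fdeg a b c q|)⁻¹) p :=
    ((hf.abs hnd).sqrt (by simpa using hnd)).inv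
      (ne_of_gt (Real.sqrt_pos.mpr (abs_pos.mpr hnd)))
  have hN : DifferentiableAt ℝ (Nvec a b c) p := by
    rw [← Lmap_eq]; exact (Lmap a b c).differentiableAt
  have h := fderiv_fun_smul (𝕜 := ℝ) hg hN
  have h2 : fderiv ℝ (Nvec a b c) p = Lmap a b c := by
    rw [← Lmap_eq]; exact (Lmap a b c).fderiv
  rw [show nuField a b c = fun q => (Real.sqrt |fdeg a b c q|)⁻¹ • Nvec a b c q from rfl,
    h, h2]
  simp [ContinuousLinearMap.smulRight_apply, Lmap_eq]

lemma keylemma (a b c p0 p1 p2 v0 v1 v2 w0 w1 w2 s al be sg F : ℝ)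
    (ha : a ≠ 0) (hb : b ≠ 0) (hc : c ≠ 0) (hF : F ≠ 0)
    (hFd : F = (p0 / a) ^ 2 + (p1 / b) ^ 2 - (p2 / c) ^ 2)
    (hp : p0 ^ 2 / a + p1 ^ 2 / b + p2 ^ 2 / c = 1)
    (htv : v0 * (p0 / a) + v1 * (p1 / b) - v2 * (-p2 / c) = 0)
    (htw : w0 * (p0 / a) + w1 * (p1 / b) - w2 * (-p2 / c) = 0)
    (hs2 : s ^ 2 * F = sg) :
    -(s * (v0 / a) + al * (p0 / a)) * -(s * (w1 / b) + be * (p1 / b)) * (-p2 / c) -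
              -(s * (v0 / a) + al * (p0 / a)) * -(s * (-w2 / c) + be * (-p2 / c)) * (p1 / b) -
            -(s * (v1 / b) + al * (p1 / b)) * -(s * (w0 / a) + be * (p0 / a)) * (-p2 / c) +
          -(s * (v1 / b) + al * (p1 / b)) * -(s * (-w2 / c) + be * (-p2 / c)) * (p0 / a) +
        -(s * (-v2 / c) + al * (-p2 / c)) * -(s * (w0 / a) + be * (p0 / a)) * (p1 / b) -
      -(s * (-v2 / c) + al * (-p2 / c)) * -(s * (w1 / b) + be * (p1 / b)) * (p0 / a) =
    sg * -(1 / (a * b * c * F ^ 2)) *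
      (v0 * w1 * (-p2 / c) - v0 * w2 * (p1 / b) - v1 * w0 * (-p2 / c) + v1 * w2 * (p0 / a) +
          v2 * w0 * (p1 / b) -
        v2 * w1 * (p0 / a)) := by
  set D0 : ℝ := v0 * w1 * p2 - v0 * w2 * p1 - v1 * w0 * p2 + v1 * w2 * p0 + v2 * w0 * p1 -
    v2 * w1 * p0 with hD0
  set D1 : ℝ := (v0 / a) * (w1 / b) * (-p2 / c) - (v0 / a) * (-w2 / c) * (p1 / b) -
      (v1 / b) * (w0 / a) * (-p2 / c) + (v1 / b) * (-w2 / c) * (p0 / a) +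
      (-v2 / c) * (w0 / a) * (p1 / b) - (-v2 / c) * (w1 / b) * (p0 / a) with hD1
  set D2 : ℝ := v0 * w1 * (-p2 / c) - v0 * w2 * (p1 / b) - v1 * w0 * (-p2 / c) +
      v1 * w2 * (p0 / a) + v2 * w0 * (p1 / b) - v2 * w1 * (p0 / a) with hD2
  have h1 : -(s * (v0 / a) + al * (p0 / a)) * -(s * (w1 / b) + be * (p1 / b)) * (-p2 / c) -
              -(s * (v0 / a) + al * (p0 / a)) * -(s * (-w2 / c) + be * (-p2 / c)) * (p1 / b) -
            -(s * (v1 / b) + al * (p1 / b)) * -(s * (w0 / a) + be * (p0 / a)) * (-p2 / c) +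
          -(s * (v1 / b) + al * (p1 / b)) * -(s * (-w2 / c) + be * (-p2 / c)) * (p0 / a) +
        -(s * (-v2 / c) + al * (-p2 / c)) * -(s * (w0 / a) + be * (p0 / a)) * (p1 / b) -
      -(s * (-v2 / c) + al * (-p2 / c)) * -(s * (w1 / b) + be * (p1 / b)) * (p0 / a) =
      s ^ 2 * D1 := by rw [hD1]; ring
  have h2 : D1 * (a * b * c) = -D0 := by rw [hD1, hD0]; field_simp; ring
  have hC : D0 * F = D2 := by
    rw [hFd, hD0, hD2]
    linear_combination
      (v0 * ((p1 / b) * p2 + (p2 / c) * p1) + v1 * (-((p2 / c) * p0) - (p0 / a) * p2) +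
          v2 * ((p0 / a) * p1 - (p1 / b) * p0)) * htw -
      (w0 * ((p1 / b) * p2 + (p2 / c) * p1) + w1 * (-((p2 / c) * p0) - (p0 / a) * p2) +
          w2 * ((p0 / a) * p1 - (p1 / b) * p0)) * htv +
      (v0 * w1 * (-p2 / c) - v0 * w2 * (p1 / b) - v1 * w0 * (-p2 / c) + v1 * w2 * (p0 / a) +
          v2 * w0 * (p1 / b) - v2 * w1 * (p0 / a)) * hp
  have hk : (a * b * c * F ^ 2) ≠ 0 :=
    mul_ne_zero (mul_ne_zero (mul_ne_zero ha hb) hc) (pow_ne_zero _ hF)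
  refine mul_left_cancel₀ hk ?_
  rw [h1]
  have hsimp : a * b * c * F ^ 2 * (sg * -(1 / (a * b * c * F ^ 2)) * D2) = -(sg * D2) := by
    field_simp
  rw [hsimp]
  linear_combination (F ^ 2 * s ^ 2) * h2 + (-(F * D0)) * hs2 + (-sg) * hC

/-- The Gauss curvature K of the ellipsoid x²/a + y²/b + z²/c = 1 in Minkowski 3-space
satisfies 1/K = −abc(x²/a² + y²/b² − z²/c²)², off the tropics; in particular K < 0.
The shape operator is S v = −Dν(v) on the tangent plane {v : ⟨v, N⟩ = 0}, and
K = ε·det S with ε = sign⟨ν,ν⟩; det S is expressed by comparing 3×3 determinants. -/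
theorem stmt13 (a b c : ℝ) (ha : 0 < a) (hb : 0 < b) (hc : 0 < c)
    (p : Fin 3 → ℝ)
    (hp : (p 0) ^ 2 / a + (p 1) ^ 2 / b + (p 2) ^ 2 / c = 1)
    (hnd : fdeg a b c p ≠ 0) :
    (-(1 / (a * b * c * (fdeg a b c p) ^ 2)) : ℝ) < 0 ∧
    ∀ v w : Fin 3 → ℝ, mink v (Nvec a b c p) = 0 → mink w (Nvec a b c p) = 0 →
      Matrix.det (Matrix.of
          ![-(fderiv ℝ (nuField a b c) p v), -(fderiv ℝ (nuField a b c) p w),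
            Nvec a b c p]) =
        ((if 0 < fdeg a b c p then (1 : ℝ) else -1) *
            (-(1 / (a * b * c * (fdeg a b c p) ^ 2)))) *
          Matrix.det (Matrix.of ![v, w, Nvec a b c p]) := by
  constructor
  · have hsq : 0 < (fdeg a b c p) ^ 2 := by positivity
    have hpos : 0 < a * b * c * (fdeg a b c p) ^ 2 :=
      mul_pos (mul_pos (mul_pos ha hb) hc) hsq
    exact neg_lt_zero.mpr (one_div_pos.mpr hpos)
  · intro v w htv htw
    rw [fderiv_nu a b c p hnd v, fderiv_nu a b c p hnd w]
    set s : ℝ := (Real.sqrt |fdeg a b c p|)⁻¹ with hs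
    set al : ℝ := fderiv ℝ (fun q => (Real.sqrt |fdeg a b c q|)⁻¹) p v with hal
    set be : ℝ := fderiv ℝ (fun q => (Real.sqrt |fdeg a b c q|)⁻¹) p w with hbe
    have hs2 : s ^ 2 * |fdeg a b c p| = 1 := by
      rw [hs, inv_pow, inv_mul_eq_div, div_eq_one_iff_eq (by simpa using hnd)]
      exact (Real.sq_sqrt (abs_nonneg _)).symm
    rw [Matrix.det_fin_three, Matrix.det_fin_three]
    simp only [Matrix.of_apply, Matrix.cons_val', Matrix.cons_val_zero, Matrix.cons_val_one,
      Matrix.head_cons, Matrix.head_fin_const, Matrix.empty_val', Matrix.cons_val_fin_one,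
      Matrix.cons_val_two, Matrix.tail_cons, Pi.add_apply, Pi.smul_apply, Pi.neg_apply,
      smul_eq_mul, Nvec, mink] at *
    have hFd : fdeg a b c p = (p 0 / a) ^ 2 + (p 1 / b) ^ 2 - (p 2 / c) ^ 2 := rfl
    by_cases hF : 0 < fdeg a b c p
    · rw [if_pos hF]
      rw [abs_of_pos hF] at hs2
      exact keylemma a b c (p 0) (p 1) (p 2) (v 0) (v 1) (v 2) (w 0) (w 1) (w 2) s al be 1
        (fdeg a b c p) ha.ne' hb.ne' hc.ne' hnd hFd hp htv htw hs2
    · rw [if_neg hF]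
      have hneg : fdeg a b c p < 0 := (not_lt.mp hF).lt_of_ne hnd
      rw [abs_of_neg hneg] at hs2
      have hs2' : s ^ 2 * fdeg a b c p = -1 := by linarith [hs2]
      exact keylemma a b c (p 0) (p 1) (p 2) (v 0) (v 1) (v 2) (w 0) (w 1) (w 2) s al be (-1)
        (fdeg a b c p) ha.ne' hb.ne' hc.ne' hnd hFd hp htv htw hs2'
end

section
/- On the ellipsoid x²/a + y²/b + z²/c = 1 in Minkowski 3-space, within the region where f(Q) = x²/a² + y²/b² − z²/c² ≠ 0, the metric induced from the Minkowski form is geodesically equivalent to the Riemannian metric ds² = (dx²/a + dy²/b + dz²/c)/|x²/a² + y²/b² − z²/c²|: every critical curve of the Lagrangian L(P,Q) = (A(P)·P)/f(Q) (where A = diag(1/a,1/b,1/c), constrained to the ellipsoid) satisfies, after the normal component is removed, that its acceleration Q̈ lies in the plane spanned by the velocity Q̇ and the Minkowski normal N(Q) = (x/a, y/b, −z/c); hence it is a reparametrized geodesic of the induced metric. -/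
/-- The induced metric on the ellipsoid in Minkowski 3-space is geodesically equivalent to
ds² = (dx²/a + dy²/b + dz²/c)/|x²/a² + y²/b² − z²/c²|: every curve on the ellipsoid
satisfying the constrained Euler–Lagrange equation
A(Q̈) − (P·∇f/f)A(P) + (A(P)·P/(2f))∇f = λ·A(Q) (with A = diag(1/a,1/b,1/c),
f = x²/a² + y²/b² − z²/c²) has acceleration in the span of the velocity and the Minkowski
normal N(Q) = (x/a, y/b, −z/c); hence it is a reparametrized geodesic of the induced metric. -/
theorem stmt14 (a b c : ℝ) (ha : 0 < a) (hb : 0 < b) (hc : 0 < c)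
    (x y z u v w xdd ydd zdd lam : ℝ → ℝ)
    (hell : ∀ t, (x t) ^ 2 / a + (y t) ^ 2 / b + (z t) ^ 2 / c = 1)
    (hx : ∀ t, HasDerivAt x (u t) t) (hy : ∀ t, HasDerivAt y (v t) t)
    (hz : ∀ t, HasDerivAt z (w t) t)
    (hu : ∀ t, HasDerivAt u (xdd t) t) (hv : ∀ t, HasDerivAt v (ydd t) t)
    (hw : ∀ t, HasDerivAt w (zdd t) t)
    (hnd : ∀ t, (x t) ^ 2 / a ^ 2 + (y t) ^ 2 / b ^ 2 - (z t) ^ 2 / c ^ 2 ≠ 0)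
    (hEL1 : ∀ t, xdd t / a -
        (2 * (x t * u t / a ^ 2 + y t * v t / b ^ 2 - z t * w t / c ^ 2) /
          ((x t) ^ 2 / a ^ 2 + (y t) ^ 2 / b ^ 2 - (z t) ^ 2 / c ^ 2)) * (u t / a) +
        (((u t) ^ 2 / a + (v t) ^ 2 / b + (w t) ^ 2 / c) /
          (2 * ((x t) ^ 2 / a ^ 2 + (y t) ^ 2 / b ^ 2 - (z t) ^ 2 / c ^ 2))) *
          (2 * x t / a ^ 2) = lam t * (x t / a))
    (hEL2 : ∀ t, ydd t / b -
        (2 * (x t * u t / a ^ 2 + y t * v t / b ^ 2 - z t * w t / c ^ 2) /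
          ((x t) ^ 2 / a ^ 2 + (y t) ^ 2 / b ^ 2 - (z t) ^ 2 / c ^ 2)) * (v t / b) +
        (((u t) ^ 2 / a + (v t) ^ 2 / b + (w t) ^ 2 / c) /
          (2 * ((x t) ^ 2 / a ^ 2 + (y t) ^ 2 / b ^ 2 - (z t) ^ 2 / c ^ 2))) *
          (2 * y t / b ^ 2) = lam t * (y t / b))
    (hEL3 : ∀ t, zdd t / c -
        (2 * (x t * u t / a ^ 2 + y t * v t / b ^ 2 - z t * w t / c ^ 2) /
          ((x t) ^ 2 / a ^ 2 + (y t) ^ 2 / b ^ 2 - (z t) ^ 2 / c ^ 2)) * (w t / c) +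
        (((u t) ^ 2 / a + (v t) ^ 2 / b + (w t) ^ 2 / c) /
          (2 * ((x t) ^ 2 / a ^ 2 + (y t) ^ 2 / b ^ 2 - (z t) ^ 2 / c ^ 2))) *
          (-(2 * z t) / c ^ 2) = lam t * (z t / c)) :
    ∀ t, lam t = 0 ∧ ∃ α β : ℝ,
      xdd t = α * u t + β * (x t / a) ∧
      ydd t = α * v t + β * (y t / b) ∧
      zdd t = α * w t + β * (-(z t) / c) := by

  intro t
  have ha' : a ≠ 0 := ne_of_gt ha
  have hb' : b ≠ 0 := ne_of_gt hb
  have hc' : c ≠ 0 := ne_of_gt hc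
  have hF := hnd t
  have h1 : ∀ s, x s * u s / a + y s * v s / b + z s * w s / c = 0 := by
    intro s
    have H : HasDerivAt (fun r => x r ^ 2 / a + y r ^ 2 / b + z r ^ 2 / c)
        (2 * (x s * u s / a) + 2 * (y s * v s / b) + 2 * (z s * w s / c)) s := by
      have := ((((hx s).fun_pow 2).div_const a).fun_add (((hy s).fun_pow 2).div_const b)).fun_add
        (((hz s).fun_pow 2).div_const c)
      refine this.congr_deriv ?_
      ring
    rw [show (fun r => x r ^ 2 / a + y r ^ 2 / b + z r ^ 2 / c) = fun _ => (1:ℝ) from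
      funext hell] at H
    have h0 := H.unique (hasDerivAt_const s 1)
    linarith
  have h2 : (u t * u t + x t * xdd t) / a + (v t * v t + y t * ydd t) / b +
      (w t * w t + z t * zdd t) / c = 0 := by
    have H : HasDerivAt (fun r => x r * u r / a + y r * v r / b + z r * w r / c)
        ((u t * u t + x t * xdd t) / a + (v t * v t + y t * ydd t) / b +
          (w t * w t + z t * zdd t) / c) t :=
      ((((hx t).mul (hu t)).div_const a).add (((hy t).mul (hv t)).div_const b)).add
        (((hz t).mul (hw t)).div_const c)
    rw [show (fun r => x r * u r / a + y r * v r / b + z r * w r / c) = fun _ => (0:ℝ) from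
      funext h1] at H
    exact H.unique (hasDerivAt_const t 0)
  have e1 := hEL1 t
  have e2 := hEL2 t
  have e3 := hEL3 t
  have h1t := h1 t
  have hF3 : (2 * ((x t) ^ 2 / a ^ 2 + (y t) ^ 2 / b ^ 2 - (z t) ^ 2 / c ^ 2)) *
      (2 * ((x t) ^ 2 / a ^ 2 + (y t) ^ 2 / b ^ 2 - (z t) ^ 2 / c ^ 2))⁻¹ = 1 :=
    mul_inv_cancel₀ (mul_ne_zero two_ne_zero hF)
  have haa : a * a⁻¹ = 1 := mul_inv_cancel₀ ha'
  have hbb : b * b⁻¹ = 1 := mul_inv_cancel₀ hb'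
  have hcc : c * c⁻¹ = 1 := mul_inv_cancel₀ hc'
  have hFrel : ((x t) ^ 2 / a ^ 2 + (y t) ^ 2 / b ^ 2 - (z t) ^ 2 / c ^ 2)⁻¹ =
      2 * (2 * ((x t) ^ 2 / a ^ 2 + (y t) ^ 2 / b ^ 2 - (z t) ^ 2 / c ^ 2))⁻¹ := by
    rw [mul_inv]
    ring
  have hlam : lam t = 0 := by
    have key : lam t * ((x t) ^ 2 / a + (y t) ^ 2 / b + (z t) ^ 2 / c) = 0 := by
      linear_combination (-(x t)) * e1 + (-(y t)) * e2 + (-(z t)) * e3 + h2 -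
        (2 * (x t * u t / a ^ 2 + y t * v t / b ^ 2 - z t * w t / c ^ 2) /
          ((x t) ^ 2 / a ^ 2 + (y t) ^ 2 / b ^ 2 - (z t) ^ 2 / c ^ 2)) * h1t +
        ((u t) ^ 2 / a + (v t) ^ 2 / b + (w t) ^ 2 / c) * hF3
    rw [hell t, mul_one] at key
    exact key
  rw [hlam] at e1 e2 e3
  set F := (x t) ^ 2 / a ^ 2 + (y t) ^ 2 / b ^ 2 - (z t) ^ 2 / c ^ 2 with hFdef
  set g := x t * u t / a ^ 2 + y t * v t / b ^ 2 - z t * w t / c ^ 2 with hgdef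
  set E := (u t) ^ 2 / a + (v t) ^ 2 / b + (w t) ^ 2 / c with hEdef
  refine ⟨hlam, 2 * g / F, -(E / F), ?_, ?_, ?_⟩
  · linear_combination a * e1 -
      (xdd t - 2 * g * F⁻¹ * u t + 2 * E * (2 * F)⁻¹ * (x t / a)) * haa +
      (E * x t * a⁻¹) * hFrel
  · linear_combination b * e2 -
      (ydd t - 2 * g * F⁻¹ * v t + 2 * E * (2 * F)⁻¹ * (y t / b)) * hbb +
      (E * y t * b⁻¹) * hFrel
  · linear_combination c * e3 -
      (zdd t - 2 * g * F⁻¹ * w t - 2 * E * (2 * F)⁻¹ * (z t / c)) * hcc -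
      (E * z t * c⁻¹) * hFrel
end

section
/- For the pseudo-confocal family of quadrics x²/(a+λ) + y²/(b+λ) + z²/(c−λ) = 1 in ℝ³ with a > b > 0 and c > 0, and for a generic point Q = (x₀,y₀,z₀) with x₀y₀z₀ ≠ 0, the values of λ for which the quadric passes through Q are the roots of a cubic polynomial in λ; this cubic has either three real roots or one real root, and if λ₁ ≠ λ₂ are two such values then the corresponding quadrics are orthogonal at Q with respect to the Minkowski form: the Minkowski inner product of their normals N_λ(Q) = (x₀/(a+λ), y₀/(b+λ), −z₀/(c−λ)) vanishes. -/
/-- For the pseudo-confocal family x²/(a+λ) + y²/(b+λ) + z²/(c−λ) = 1 and a generic point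
Q = (x₀,y₀,z₀) with x₀y₀z₀ ≠ 0: the parameters λ of quadrics through Q are the roots of a
cubic polynomial; this cubic has at least one real root; and two quadrics through Q with
distinct parameters are Minkowski-orthogonal at Q:
⟨N_{λ₁}(Q), N_{λ₂}(Q)⟩ = 0 for N_λ(Q) = (x₀/(a+λ), y₀/(b+λ), −z₀/(c−λ)). -/
theorem stmt18 (a b c x₀ y₀ z₀ : ℝ) (hab : a > b) (hb : 0 < b) (hc : 0 < c)
    (hx : x₀ ≠ 0) (hy : y₀ ≠ 0) (hz : z₀ ≠ 0) :
    (∀ l : ℝ, a + l ≠ 0 → b + l ≠ 0 → c - l ≠ 0 →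
      (x₀ ^ 2 / (a + l) + y₀ ^ 2 / (b + l) + z₀ ^ 2 / (c - l) = 1 ↔
        x₀ ^ 2 * (b + l) * (c - l) + y₀ ^ 2 * (a + l) * (c - l) +
          z₀ ^ 2 * (a + l) * (b + l) - (a + l) * (b + l) * (c - l) = 0)) ∧
    (∃ r : ℝ,
      x₀ ^ 2 * (b + r) * (c - r) + y₀ ^ 2 * (a + r) * (c - r) +
        z₀ ^ 2 * (a + r) * (b + r) - (a + r) * (b + r) * (c - r) = 0) ∧
    (∀ l₁ l₂ : ℝ, l₁ ≠ l₂ →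
      a + l₁ ≠ 0 → b + l₁ ≠ 0 → c - l₁ ≠ 0 →
      a + l₂ ≠ 0 → b + l₂ ≠ 0 → c - l₂ ≠ 0 →
      x₀ ^ 2 / (a + l₁) + y₀ ^ 2 / (b + l₁) + z₀ ^ 2 / (c - l₁) = 1 →
      x₀ ^ 2 / (a + l₂) + y₀ ^ 2 / (b + l₂) + z₀ ^ 2 / (c - l₂) = 1 →
      (x₀ / (a + l₁)) * (x₀ / (a + l₂)) + (y₀ / (b + l₁)) * (y₀ / (b + l₂)) -
        (-(z₀) / (c - l₁)) * (-(z₀) / (c - l₂)) = 0) := by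
  refine ⟨?_, ?_, ?_⟩
  · intro l h1 h2 h3
    rw [div_add_div _ _ h1 h2, div_add_div _ _ (mul_ne_zero h1 h2) h3,
      div_eq_one_iff_eq (mul_ne_zero (mul_ne_zero h1 h2) h3), ← sub_eq_zero]
    constructor <;> intro h <;> linear_combination h
  · set f : ℝ → ℝ := fun r => x₀ ^ 2 * (b + r) * (c - r) + y₀ ^ 2 * (a + r) * (c - r) +
        z₀ ^ 2 * (a + r) * (b + r) - (a + r) * (b + r) * (c - r) with hf
    have hcont : ContinuousOn f (Set.Icc (-a) (-b)) := by fun_prop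
    have hle : (-a : ℝ) ≤ -b := by linarith
    have hA : f (-a) < 0 := by
      simp only [hf]
      have : x₀ ^ 2 * (b + -a) * (c - -a) < 0 := by
        apply mul_neg_of_neg_of_pos
        · apply mul_neg_of_pos_of_neg (by positivity); linarith
        · linarith
      nlinarith [this]
    have hB : 0 < f (-b) := by
      simp only [hf]
      have : 0 < y₀ ^ 2 * (a + -b) * (c - -b) := by
        apply mul_pos; apply mul_pos (by positivity); linarith; linarith
      nlinarith [this]
    have := intermediate_value_Icc hle hcont
    have h0 : (0 : ℝ) ∈ Set.Icc (f (-a)) (f (-b)) := ⟨hA.le, hB.le⟩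
    obtain ⟨r, _, hr⟩ := this h0
    exact ⟨r, hr⟩
  · intro l₁ l₂ hne ha1 hb1 hc1 ha2 hb2 hc2 e1 e2
    have hd : l₁ - l₂ ≠ 0 := sub_ne_zero.mpr hne
    field_simp at e1 e2
    have key : (l₂ - l₁) * (x₀ ^ 2 * (b + l₁) * (b + l₂) * (c - l₁) * (c - l₂) +
        y₀ ^ 2 * (a + l₁) * (a + l₂) * (c - l₁) * (c - l₂) -
        z₀ ^ 2 * (a + l₁) * (a + l₂) * (b + l₁) * (b + l₂)) = 0 := by
      linear_combination (a + l₂) * (b + l₂) * (c - l₂) * e1 - (a + l₁) * (b + l₁) * (c - l₁) * e2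
    have hd2 : l₂ - l₁ ≠ 0 := sub_ne_zero.mpr (Ne.symm hne)
    have hkey := (mul_eq_zero.mp key).resolve_left hd2
    field_simp
    linear_combination hkey
end
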